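/- (Glaisher/Sun) For every prime p ≥ 7 and every even m with 2 ≤ m ≤ p-3, ∑_{k=1}^{p-1} 1/k^m ≡ (m/(m+1))·p·B_{p-1-m} mod p², where B denotes Bernoulli numbers. -/

import Mathlib

open Finset

namespace Stmt18Aux

variable {p : ℕ} [hp : Fact p.Prime]

lemma one_lt_pR : (1:ℝ) < (p:ℝ) := by exact_mod_cast hp.1.one_lt

lemma zpow_mono {x y : ℤ} (h : x ≤ y) : (p:ℝ)^x ≤ (p:ℝ)^y :=
  zpow_le_zpow_right₀ (le_of_lt one_lt_pR) h

lemma zpow_pos' (x : ℤ) : (0:ℝ) < (p:ℝ)^x := zpow_pos (lt_trans one_pos one_lt_pR) x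

lemma norm_sum_le' {ι : Type*} (s : Finset ι) (f : ι → ℚ_[p]) {C : ℝ} (hC : 0 ≤ C)
    (h : ∀ i ∈ s, ‖f i‖ ≤ C) : ‖∑ i ∈ s, f i‖ ≤ C := by
  classical
  induction s using Finset.induction_on with
  | empty => simpa using hC
  | @insert a s hx ih =>
    rw [Finset.sum_insert hx]
    refine le_trans (Padic.nonarchimedean _ _) (max_le (h a (mem_insert_self a s)) ?_)
    exact ih fun i hi => h i (mem_insert_of_mem hi)

lemma ultra_sub_trans {x y z : ℚ_[p]} {C : ℝ} (h1 : ‖x - y‖ ≤ C) (h2 : ‖y - z‖ ≤ C) :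
    ‖x - z‖ ≤ C := by
  have : x - z = (x - y) + (y - z) := by ring
  rw [this]
  exact le_trans (Padic.nonarchimedean _ _) (max_le h1 h2)

lemma norm_int_le_one' (a : ℤ) : ‖(a : ℚ_[p])‖ ≤ 1 := Padic.norm_int_le_one a

lemma norm_nat_le_one' (a : ℕ) : ‖(a : ℚ_[p])‖ ≤ 1 := by
  have := Padic.norm_int_le_one (p := p) (a : ℤ)
  rwa [Int.cast_natCast] at this

lemma norm_int_eq_one {a : ℤ} (h : ¬ (p:ℤ) ∣ a) : ‖(a : ℚ_[p])‖ = 1 := by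
  refine le_antisymm (norm_int_le_one' a) ?_
  by_contra hlt
  push_neg at hlt
  exact h ((Padic.norm_intCast_lt_one_iff (k := a)).mp hlt)

lemma norm_nat_eq_one {a : ℕ} (h : ¬ p ∣ a) : ‖(a : ℚ_[p])‖ = 1 := by
  have := norm_int_eq_one (p := p) (a := (a:ℤ)) (by exact_mod_cast h)
  simpa using this

lemma norm_int_le_pow {a : ℤ} {j : ℕ} (h : (p:ℤ)^j ∣ a) : ‖(a : ℚ_[p])‖ ≤ (p:ℝ)^(-(j:ℤ)) :=
  (Padic.norm_int_le_pow_iff_dvd a j).mpr h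

lemma norm_p_pow' (j : ℕ) : ‖((p:ℚ_[p]))^j‖ = (p:ℝ)^(-(j:ℤ)) := by
  rw [norm_pow, Padic.norm_p]
  rw [inv_pow, ← zpow_natCast, ← zpow_neg]



/-- second-order binomial expansion -/
lemma binom_second (x y : ℤ) : ∀ n : ℕ, y^2 ∣ (x+y)^(n+1) - x^(n+1) - (n+1) * x^n * y := by
  intro n
  induction n with
  | zero => refine ⟨0, by ring⟩
  | succ n ih =>
    obtain ⟨c, hc⟩ := ih
    refine ⟨c * (x + y) + (n+1) * x^n, ?_⟩
    have h2 : (x+y)^(n+1+1) = (x+y)^(n+1) * (x+y) := by ring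
    rw [h2]
    push_cast
    linear_combination (x + y) * hc

lemma seven_pow (v : ℕ) (hv : 1 ≤ v) : v + 2 ≤ 7^v := by
  induction v with
  | zero => omega
  | succ v ih =>
    rcases Nat.eq_zero_or_pos v with h | h
    · subst h; norm_num
    · have := ih h
      have h7 : 7^(v+1) = 7 * 7^v := by ring
      omega

/-- the p-adic valuation of s is at most s - 2, as a norm bound -/
lemma norm_inv_nat_le (hp7 : 7 ≤ p) {s : ℕ} (hs : 2 ≤ s) :
    ‖((s : ℚ_[p]))⁻¹‖ ≤ (p:ℝ)^((s:ℤ)-2) := by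
  have hs0 : s ≠ 0 := by omega
  set v := s.factorization p with hv
  have hfac : p^v * (s / p^v) = s := Nat.ordProj_mul_ordCompl_eq_self s p
  have hndvd : ¬ p ∣ (s / p^v) := Nat.not_dvd_ordCompl hp.1 hs0
  have hle : p^v ≤ s := Nat.ordProj_le p hs0
  have hvs : v ≤ s - 2 := by
    rcases Nat.eq_zero_or_pos v with h | h
    · omega
    · have h1 : v + 2 ≤ 7^v := seven_pow v h
      have h2 : 7^v ≤ p^v := Nat.pow_le_pow_left hp7 v
      omega
  have hnorm : ‖((s : ℚ_[p]))‖ = (p:ℝ)^(-(v:ℤ)) := by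
    have : (s : ℚ_[p]) = ((p:ℚ_[p]))^v * ((s / p^v : ℕ) : ℚ_[p]) := by
      rw [← Nat.cast_pow, ← Nat.cast_mul, hfac]
    rw [this, norm_mul, norm_p_pow', norm_nat_eq_one hndvd, mul_one]
  rw [norm_inv, hnorm, ← zpow_neg, neg_neg]
  apply zpow_mono
  omega

/-- `C(n+1,i)/(n+1)` p-adic norm bound via `C(n,i)/(n+1-i)` -/
lemma norm_choose_div_le (hp7 : 7 ≤ p) {n i : ℕ} (hi : i < n) :
    ‖(((n+1).choose i : ℚ_[p])) / ((n:ℚ_[p])+1)‖ ≤ (p:ℝ)^(((n+1-i:ℕ):ℤ)-2) := by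
  have key : (((n+1).choose i : ℚ_[p])) / ((n:ℚ_[p])+1)
      = ((n.choose i : ℚ_[p])) / ((n+1-i : ℕ) : ℚ_[p]) := by
    have hnat := Nat.choose_mul_succ_eq n i
    have h1 : ((n:ℚ_[p])+1) ≠ 0 := by exact_mod_cast (Nat.cast_ne_zero (R := ℚ_[p])).mpr (Nat.succ_ne_zero n)
    have h2 : ((n+1-i : ℕ) : ℚ_[p]) ≠ 0 := by
      have : n+1-i ≠ 0 := by omega
      exact_mod_cast (Nat.cast_ne_zero (R := ℚ_[p])).mpr this
    field_simp
    have := congrArg (fun t : ℕ => (t : ℚ_[p])) hnat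
    push_cast at this ⊢
    linear_combination -this
  rw [key, div_eq_mul_inv, norm_mul]
  calc ‖(n.choose i : ℚ_[p])‖ * ‖(((n+1-i:ℕ) : ℚ_[p]))⁻¹‖
      ≤ 1 * (p:ℝ)^(((n+1-i:ℕ):ℤ)-2) := by
        apply mul_le_mul (norm_nat_le_one' _) (norm_inv_nat_le hp7 (by omega)) (norm_nonneg _)
          zero_le_one
    _ = (p:ℝ)^(((n+1-i:ℕ):ℤ)-2) := one_mul _


lemma sigma_mem {g : ℕ} (hg : ¬ p ∣ g) {k : ℕ} (hk : k ∈ Icc 1 (p-1)) :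
    (k * g) % p ∈ Icc 1 (p-1) := by
  have hk' := mem_Icc.mp hk
  have hlt : (k*g) % p < p := Nat.mod_lt _ hp.1.pos
  have hne : (k*g) % p ≠ 0 := by
    intro h
    have hd : p ∣ k * g := Nat.dvd_of_mod_eq_zero h
    rcases (Nat.Prime.dvd_mul hp.1).mp hd with h' | h'
    · have := Nat.le_of_dvd (by omega) h'; omega
    · exact hg h'
  exact mem_Icc.mpr ⟨by omega, by omega⟩

lemma sigma_inj {g : ℕ} (hg : ¬ p ∣ g) :
    ∀ k ∈ Icc 1 (p-1), ∀ k' ∈ Icc 1 (p-1), (k*g) % p = (k'*g) % p → k = k' := by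
  intro k hk k' hk' h
  have hk2 := mem_Icc.mp hk
  have hk2' := mem_Icc.mp hk'
  have hco : Nat.gcd p g = 1 := hp.1.coprime_iff_not_dvd.mpr hg
  have hmod : k * g ≡ k' * g [MOD p] := h
  have : k ≡ k' [MOD p] := hmod.cancel_right_of_coprime hco
  have h1 : k % p = k' % p := this
  rw [Nat.mod_eq_of_lt (by omega), Nat.mod_eq_of_lt (by omega)] at h1
  exact h1

lemma sigma_image {g : ℕ} (hg : ¬ p ∣ g) :
    image (fun k => (k*g) % p) (Icc 1 (p-1)) = Icc 1 (p-1) := by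
  apply eq_of_subset_of_card_le
  · intro x hx
    obtain ⟨k, hk, rfl⟩ := mem_image.mp hx
    exact sigma_mem hg hk
  · rw [card_image_of_injOn (fun k hk k' hk' => sigma_inj hg k hk k' hk')]

lemma sum_sigma {M : Type*} [AddCommMonoid M] {g : ℕ} (hg : ¬ p ∣ g) (F : ℕ → M) :
    ∑ k ∈ Icc 1 (p-1), F ((k*g) % p) = ∑ k ∈ Icc 1 (p-1), F k := by
  conv_rhs => rw [← sigma_image hg]
  rw [Finset.sum_image (sigma_inj hg)]

lemma exists_gen : ∃ g : ℕ, g ∈ Icc 1 (p-1) ∧ ¬ p ∣ g ∧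
    ∀ n : ℕ, ¬ (p-1) ∣ n → ¬ ((p:ℤ) ∣ ((g:ℤ)^n - 1)) := by
  haveI : NeZero p := ⟨hp.1.ne_zero⟩
  obtain ⟨γ, hγ⟩ := IsCyclic.exists_generator (α := (ZMod p)ˣ)
  have hord : orderOf γ = p - 1 := by
    rw [orderOf_eq_card_of_forall_mem_zpowers hγ, Nat.card_eq_fintype_card, ZMod.card_units]
  set g : ℕ := ((γ : ZMod p)).val with hgdef
  have hcast : ((g : ℕ) : ZMod p) = (γ : ZMod p) := ZMod.natCast_rightInverse _
  have hglt : g < p := ZMod.val_lt _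
  have hgne : g ≠ 0 := by
    intro h
    apply Units.ne_zero γ
    rw [← hcast, h, Nat.cast_zero]
  have hgdvd : ¬ p ∣ g := by
    intro h
    have := Nat.le_of_dvd (by omega) h
    omega
  refine ⟨g, mem_Icc.mpr ⟨by omega, by omega⟩, hgdvd, ?_⟩
  intro n hn hdvd
  apply hn
  have h0 : (((g:ℤ)^n - 1 : ℤ) : ZMod p) = 0 := by
    rw [ZMod.intCast_zmod_eq_zero_iff_dvd]
    exact_mod_cast hdvd
  push_cast at h0
  rw [hcast] at h0
  have h1 : (γ : ZMod p)^n = 1 := by linear_combination h0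
  have h2 : γ^n = 1 := by
    apply Units.ext
    push_cast
    exact h1
  rw [← hord]
  exact orderOf_dvd_of_pow_eq_one h2

lemma p_dvd_S {n : ℕ} (hn : ¬ (p-1) ∣ n) :
    (p:ℤ) ∣ ∑ k ∈ Icc 1 (p-1), (k:ℤ)^n := by
  obtain ⟨g, hgmem, hgdvd, hgkey⟩ := exists_gen (p := p)
  set S : ℤ := ∑ k ∈ Icc 1 (p-1), (k:ℤ)^n with hS
  have h1 : ∑ k ∈ Icc 1 (p-1), (((k*g) % p : ℕ):ℤ)^n = S :=
    sum_sigma hgdvd (fun j => (j:ℤ)^n)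
  have h2 : (p:ℤ) ∣ (g:ℤ)^n * S - S := by
    have hterm : ∀ k ∈ Icc 1 (p-1), (p:ℤ) ∣ (((k*g : ℕ):ℤ)^n - (((k*g) % p : ℕ):ℤ)^n) := by
      intro k _
      have hmod : (k*g) % p ≡ k*g [MOD p] := Nat.mod_modEq _ _
      have := (hmod.pow n).dvd
      simpa using this
    have hd := Finset.dvd_sum hterm
    have hsplit : ∑ k ∈ Icc 1 (p-1), (((k*g:ℕ):ℤ)^n - (((k*g) % p : ℕ):ℤ)^n)
        = (g:ℤ)^n * S - S := by
      rw [Finset.sum_sub_distrib, h1, hS, Finset.mul_sum]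
      congr 1
      apply Finset.sum_congr rfl
      intro k _
      push_cast
      ring
    rwa [hsplit] at hd
  have h3 : (p:ℤ) ∣ ((g:ℤ)^n - 1) * S := by
    have : ((g:ℤ)^n - 1) * S = (g:ℤ)^n * S - S := by ring
    rwa [this]
  have hpint : Prime (p:ℤ) := Nat.prime_iff_prime_int.mp hp.1
  rcases (hpint.dvd_mul.mp h3) with h | h
  · exact absurd h (hgkey n hn)
  · exact h


lemma norm_sub_max (x y : ℚ_[p]) : ‖x - y‖ ≤ max ‖x‖ ‖y‖ := by
  have := Padic.nonarchimedean x (-y)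
  simpa [sub_eq_add_neg] using this

lemma norm_of_p_mul {x : ℚ_[p]} {t : ℤ} (h : ‖(p:ℚ_[p]) * x‖ ≤ (p:ℝ)^t) :
    ‖x‖ ≤ (p:ℝ)^(t+1) := by
  have hp0 : (0:ℝ) < (p:ℝ) := lt_trans one_pos one_lt_pR
  rw [norm_mul, Padic.norm_p] at h
  have h2 := mul_le_mul_of_nonneg_left h (le_of_lt hp0)
  rw [← mul_assoc, mul_inv_cancel₀ (ne_of_gt hp0), one_mul] at h2
  calc ‖x‖ ≤ (p:ℝ) * (p:ℝ)^t := h2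
    _ = (p:ℝ)^(t+1) := by rw [add_comm, zpow_add₀ (ne_of_gt hp0), zpow_one]

/-- the Faulhaber sum term -/
noncomputable def tt (p : ℕ) [Fact p.Prime] (n i : ℕ) : ℚ_[p] :=
  (bernoulli i : ℚ_[p]) * ((n+1).choose i : ℚ_[p]) * (p:ℚ_[p])^(n+1-i) / ((n:ℚ_[p])+1)

lemma sum_pow_cast (n N : ℕ) :
    (∑ k ∈ range N, (k:ℚ_[p])^n) =
      ∑ i ∈ range (n+1), (bernoulli i : ℚ_[p]) * (((n+1).choose i : ℕ) : ℚ_[p])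
        * (N:ℚ_[p])^(n+1-i) / ((n:ℚ_[p])+1) := by
  have h := congrArg (fun q : ℚ => (q : ℚ_[p])) (sum_range_pow N n)
  push_cast at h
  exact_mod_cast h

lemma pB_decomp (n : ℕ) :
    (p:ℚ_[p]) * (bernoulli n : ℚ_[p]) =
      (∑ k ∈ range p, (k:ℚ_[p])^n) - ∑ i ∈ range n, tt p n i := by
  have h := sum_pow_cast (p := p) n p
  rw [Finset.sum_range_succ] at h
  have hne : ((n:ℚ_[p])+1) ≠ 0 := by
    have : (((n+1:ℕ)) : ℚ_[p]) ≠ 0 := Nat.cast_ne_zero.mpr (Nat.succ_ne_zero n)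
    push_cast at this
    exact this
  have hlast : (bernoulli n : ℚ_[p]) * (((n+1).choose n : ℕ) : ℚ_[p])
      * (p:ℚ_[p])^(n+1-n) / ((n:ℚ_[p])+1) = (p:ℚ_[p]) * (bernoulli n : ℚ_[p]) := by
    rw [Nat.choose_succ_self_right]
    have h1 : n+1-n = 1 := by omega
    rw [h1, pow_one]
    have h2 : (((n+1:ℕ)) : ℚ_[p]) = (n:ℚ_[p])+1 := by push_cast; ring
    rw [h2]
    field_simp
  rw [hlast] at h
  unfold tt
  linear_combination -h

lemma norm_SK_le_one (n : ℕ) : ‖∑ k ∈ range p, (k:ℚ_[p])^n‖ ≤ 1 := by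
  apply norm_sum_le' _ _ zero_le_one
  intro k _
  rw [norm_pow]
  exact pow_le_one₀ (norm_nonneg _) (norm_nat_le_one' k)

lemma tt_norm_bound1 (hp7 : 7 ≤ p) {n i : ℕ} (hi : i < n) {c : ℤ}
    (hB : ‖(bernoulli i : ℚ_[p])‖ ≤ (p:ℝ)^c) : ‖tt p n i‖ ≤ (p:ℝ)^(c-2) := by
  have hp0 : (0:ℝ) < (p:ℝ) := lt_trans one_pos one_lt_pR
  have heq : tt p n i = (bernoulli i : ℚ_[p]) *
      ((((n+1).choose i : ℕ) : ℚ_[p]) / ((n:ℚ_[p])+1)) * (p:ℚ_[p])^(n+1-i) := by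
    unfold tt; ring
  rw [heq, norm_mul, norm_mul, norm_p_pow']
  calc ‖(bernoulli i : ℚ_[p])‖ * ‖(((n+1).choose i : ℕ) : ℚ_[p]) / ((n:ℚ_[p])+1)‖ * (p:ℝ)^(-((n+1-i:ℕ):ℤ))
      ≤ (p:ℝ)^c * (p:ℝ)^(((n+1-i:ℕ):ℤ)-2) * (p:ℝ)^(-((n+1-i:ℕ):ℤ)) := by
        refine mul_le_mul_of_nonneg_right ?_ (le_of_lt (zpow_pos' _))
        exact mul_le_mul hB (norm_choose_div_le hp7 hi) (norm_nonneg _) (le_of_lt (zpow_pos' _))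
    _ = (p:ℝ)^(c-2) := by
        rw [← zpow_add₀ (ne_of_gt hp0), ← zpow_add₀ (ne_of_gt hp0)]
        congr 1
        ring

lemma tt_norm_bound2 {n i : ℕ} (hi : i < n) (hnd : ¬ p ∣ (n+1)) {c : ℤ}
    (hB : ‖(bernoulli i : ℚ_[p])‖ ≤ (p:ℝ)^c) :
    ‖tt p n i‖ ≤ (p:ℝ)^(c-((n+1-i:ℕ):ℤ)) := by
  have hp0 : (0:ℝ) < (p:ℝ) := lt_trans one_pos one_lt_pR
  have hden : ‖((n:ℚ_[p])+1)‖ = 1 := by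
    have h2 : (((n+1:ℕ)) : ℚ_[p]) = (n:ℚ_[p])+1 := by push_cast; ring
    rw [← h2]
    exact norm_nat_eq_one hnd
  unfold tt
  rw [norm_div, hden, div_one, norm_mul, norm_mul, norm_p_pow']
  calc ‖(bernoulli i : ℚ_[p])‖ * ‖(((n+1).choose i : ℕ) : ℚ_[p])‖ * (p:ℝ)^(-((n+1-i:ℕ):ℤ))
      ≤ (p:ℝ)^c * 1 * (p:ℝ)^(-((n+1-i:ℕ):ℤ)) := by
        refine mul_le_mul_of_nonneg_right ?_ (le_of_lt (zpow_pos' _))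
        exact mul_le_mul hB (norm_nat_le_one' _) (norm_nonneg _) (le_of_lt (zpow_pos' _))
    _ = (p:ℝ)^(c-((n+1-i:ℕ):ℤ)) := by
        rw [mul_one, ← zpow_add₀ (ne_of_gt hp0), sub_eq_add_neg]

lemma bernoulli_norm_le_p (hp7 : 7 ≤ p) (n : ℕ) : ‖(bernoulli n : ℚ_[p])‖ ≤ (p:ℝ) := by
  induction n using Nat.strong_induction_on with
  | _ n ih =>
  have hp0 : (0:ℝ) < (p:ℝ) := lt_trans one_pos one_lt_pR
  rcases Nat.eq_zero_or_pos n with rfl | hn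
  · rw [bernoulli_zero]
    push_cast
    rw [norm_one]
    have := one_lt_pR (p := p)
    linarith
  have hdec := pB_decomp (p := p) n
  have hterm : ∀ i ∈ range n, ‖tt p n i‖ ≤ 1 := by
    intro i hi
    have hB := ih i (mem_range.mp hi)
    have : ‖(bernoulli i : ℚ_[p])‖ ≤ (p:ℝ)^(1:ℤ) := by rwa [zpow_one]
    calc ‖tt p n i‖ ≤ (p:ℝ)^((1:ℤ)-2) := tt_norm_bound1 hp7 (mem_range.mp hi) this
      _ ≤ (p:ℝ)^(0:ℤ) := zpow_mono (by omega)
      _ = 1 := zpow_zero _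
  have hsum : ‖∑ i ∈ range n, tt p n i‖ ≤ 1 := norm_sum_le' _ _ zero_le_one hterm
  have hmax : ‖(p:ℚ_[p]) * (bernoulli n : ℚ_[p])‖ ≤ 1 := by
    rw [hdec]
    exact le_trans (norm_sub_max _ _) (max_le (norm_SK_le_one n) hsum)
  have h1 : ‖(p:ℚ_[p]) * (bernoulli n : ℚ_[p])‖ ≤ (p:ℝ)^(0:ℤ) := by rwa [zpow_zero]
  have := norm_of_p_mul h1
  rwa [zero_add, zpow_one] at this

lemma bernoulli_odd_norm (hp7 : 7 ≤ p) {i : ℕ} (hodd : Odd i) :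
    ‖(bernoulli i : ℚ_[p])‖ ≤ 1 := by
  rcases eq_or_ne i 1 with rfl | hne
  · rw [bernoulli_one]
    push_cast
    rw [norm_div, norm_neg, norm_one]
    have h2 : ‖((2:ℕ) : ℚ_[p])‖ = 1 := by
      apply norm_nat_eq_one
      intro h
      have := Nat.le_of_dvd (by norm_num) h
      omega
    push_cast at h2
    rw [h2]
    norm_num
  · have h0 : bernoulli i = 0 := by
      rw [bernoulli_eq_bernoulli'_of_ne_one hne]
      apply bernoulli'_eq_zero_of_odd hodd
      rcases hodd with ⟨j, hj⟩
      omega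
    rw [h0]
    push_cast
    simp

lemma SK_eq_int (n : ℕ) (hn : 1 ≤ n) :
    (∑ k ∈ range p, (k:ℚ_[p])^n) = ((∑ k ∈ Icc 1 (p-1), (k:ℤ)^n : ℤ) : ℚ_[p]) := by
  have h2 := hp.1.two_le
  have hset : range p = insert 0 (Icc 1 (p-1)) := by
    ext x
    simp only [mem_range, mem_insert, mem_Icc]
    omega
  rw [hset, Finset.sum_insert (by simp)]
  push_cast
  rw [zero_pow (by omega), zero_add]

lemma bernoulli_norm_le_one (hp7 : 7 ≤ p) {n : ℕ} (heven : Even n) (hn1 : 1 ≤ n)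
    (hnd : ¬ (p-1) ∣ n) : ‖(bernoulli n : ℚ_[p])‖ ≤ 1 := by
  have hp0 : (0:ℝ) < (p:ℝ) := lt_trans one_pos one_lt_pR
  have hdec := pB_decomp (p := p) n
  have hSK : ‖∑ k ∈ range p, (k:ℚ_[p])^n‖ ≤ (p:ℝ)^(-1:ℤ) := by
    rw [SK_eq_int n hn1]
    have := norm_int_le_pow (p := p) (j := 1) (by simpa using p_dvd_S hnd)
    simpa using this
  have hterm : ∀ i ∈ range n, ‖tt p n i‖ ≤ (p:ℝ)^(-1:ℤ) := by
    intro i hi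
    have hilt := mem_range.mp hi
    rcases eq_or_ne i (n-1) with rfl | hne
    · have hodd : Odd (n-1) := by
        rcases heven with ⟨j, hj⟩
        refine ⟨j-1, by omega⟩
      have hB : ‖(bernoulli (n-1) : ℚ_[p])‖ ≤ (p:ℝ)^(0:ℤ) := by
        rw [zpow_zero]; exact bernoulli_odd_norm hp7 hodd
      calc ‖tt p n (n-1)‖ ≤ (p:ℝ)^((0:ℤ)-2) := tt_norm_bound1 hp7 hilt hB
        _ ≤ (p:ℝ)^(-1:ℤ) := zpow_mono (by omega)
    · have hB : ‖(bernoulli i : ℚ_[p])‖ ≤ (p:ℝ)^(1:ℤ) := by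
        rw [zpow_one]; exact bernoulli_norm_le_p hp7 i
      have hs : (3:ℤ) ≤ ((n+1-i:ℕ):ℤ) := by
        have : i < n - 1 := by omega
        omega
      calc ‖tt p n i‖ ≤ (p:ℝ)^((1:ℤ)-2) := tt_norm_bound1 hp7 hilt hB
        _ ≤ (p:ℝ)^(-1:ℤ) := zpow_mono (by omega)
  have hsum := norm_sum_le' _ _ (le_of_lt (zpow_pos' (-1:ℤ))) hterm
  have hmax : ‖(p:ℚ_[p]) * (bernoulli n : ℚ_[p])‖ ≤ (p:ℝ)^(-1:ℤ) := by
    rw [hdec]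
    exact le_trans (norm_sub_max _ _) (max_le hSK hsum)
  have := norm_of_p_mul hmax
  rwa [neg_add_cancel, zpow_zero] at this


lemma S_cong (hp7 : 7 ≤ p) {n : ℕ} (heven : Even n) (hn2 : 2 ≤ n) (hnd : ¬ p ∣ (n+1)) :
    ‖((∑ k ∈ Icc 1 (p-1), (k:ℤ)^n : ℤ) : ℚ_[p]) - (p:ℚ_[p]) * (bernoulli n : ℚ_[p])‖
      ≤ (p:ℝ)^(-2:ℤ) := by
  rw [← SK_eq_int n (by omega), pB_decomp (p:=p) n]
  have heq : (∑ k ∈ range p, (k:ℚ_[p])^n)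
      - ((∑ k ∈ range p, (k:ℚ_[p])^n) - ∑ i ∈ range n, tt p n i)
      = ∑ i ∈ range n, tt p n i := by ring
  rw [heq]
  apply norm_sum_le' _ _ (le_of_lt (zpow_pos' _))
  intro i hi
  have hilt := mem_range.mp hi
  rcases eq_or_ne i (n-1) with rfl | hne
  · have hodd : Odd (n-1) := by
      rcases heven with ⟨j, hj⟩
      exact ⟨j-1, by omega⟩
    have hB : ‖(bernoulli (n-1) : ℚ_[p])‖ ≤ (p:ℝ)^(0:ℤ) := by
      rw [zpow_zero]; exact bernoulli_odd_norm hp7 hodd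
    have hbd := tt_norm_bound2 hilt hnd hB
    have hs : ((n+1-(n-1):ℕ):ℤ) = 2 := by omega
    rw [hs] at hbd
    calc ‖tt p n (n-1)‖ ≤ (p:ℝ)^((0:ℤ)-2) := hbd
      _ ≤ (p:ℝ)^(-2:ℤ) := zpow_mono (by omega)
  · have hB : ‖(bernoulli i : ℚ_[p])‖ ≤ (p:ℝ)^(1:ℤ) := by
      rw [zpow_one]; exact bernoulli_norm_le_p hp7 i
    have hbd := tt_norm_bound2 hilt hnd hB
    have hs : (3:ℤ) ≤ ((n+1-i:ℕ):ℤ) := by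
      have : i < n - 1 := by omega
      omega
    calc ‖tt p n i‖ ≤ (p:ℝ)^((1:ℤ)-((n+1-i:ℕ):ℤ)) := hbd
      _ ≤ (p:ℝ)^(-2:ℤ) := zpow_mono (by omega)


lemma norm_add_le' {x y : ℚ_[p]} {C : ℝ} (hx : ‖x‖ ≤ C) (hy : ‖y‖ ≤ C) : ‖x + y‖ ≤ C :=
  le_trans (Padic.nonarchimedean _ _) (max_le hx hy)

lemma norm_mul_le' {x y : ℚ_[p]} {C : ℝ} (hx : ‖x‖ ≤ C) (hy : ‖y‖ ≤ 1) : ‖x * y‖ ≤ C := by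
  have h0 : (0:ℝ) ≤ C := le_trans (norm_nonneg x) hx
  rw [norm_mul]
  calc ‖x‖ * ‖y‖ ≤ C * 1 := mul_le_mul hx hy (norm_nonneg _) h0
    _ = C := mul_one _

lemma norm_mul_le'' {x y : ℚ_[p]} {C : ℝ} (hx : ‖x‖ ≤ 1) (hy : ‖y‖ ≤ C) : ‖x * y‖ ≤ C := by
  rw [mul_comm]; exact norm_mul_le' hy hx

lemma fermat_pow_sub {k : ℕ} (hk : ¬ p ∣ k) (e e' : ℕ) (h : e = e' + (p-1)*(p-1)) :
    (p:ℤ) ∣ (k:ℤ)^e - (k:ℤ)^e' := by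
  haveI : NeZero p := ⟨hp.1.ne_zero⟩
  rw [← ZMod.intCast_zmod_eq_zero_iff_dvd]
  push_cast
  have hx0 : (k : ZMod p) ≠ 0 := by
    rw [Ne, ZMod.natCast_eq_zero_iff]; exact hk
  have hfl : (k : ZMod p)^(p-1) = 1 := ZMod.pow_card_sub_one_eq_one hx0
  rw [h, pow_add, pow_mul, hfl, one_pow, mul_one, sub_self]

lemma voronoi_int {g : ℕ} (hg : ¬ p ∣ g) {n : ℕ} (hn : 1 ≤ n) :
    ((p:ℤ))^2 ∣ ((g:ℤ)^n - 1) * (∑ k ∈ Icc 1 (p-1), (k:ℤ)^n)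
      - (n:ℤ) * (p:ℤ) * (g:ℤ)^(n-1) * (∑ k ∈ Icc 1 (p-1), (k:ℤ)^(n-1) * (((k*g)/p : ℕ):ℤ)) := by
  set S : ℤ := ∑ k ∈ Icc 1 (p-1), (k:ℤ)^n with hS
  set T : ℤ := ∑ k ∈ Icc 1 (p-1), (k:ℤ)^(n-1) * (((k*g)/p : ℕ):ℤ) with hT
  have hterm : ∀ k ∈ Icc 1 (p-1), ((p:ℤ))^2 ∣
      ( (((k*g) % p : ℕ):ℤ)^n - ((k*g:ℕ):ℤ)^n
        + (n:ℤ) * ((k*g:ℕ):ℤ)^(n-1) * ((p:ℤ) * (((k*g)/p : ℕ):ℤ)) ) := by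
    intro k _
    set F : ℕ := (k*g)/p with hF
    set R : ℕ := (k*g) % p with hRdef
    have hkg : p * F + R = k*g := Nat.div_add_mod (k*g) p
    have hc0 := congrArg (fun t : ℕ => (t:ℤ)) hkg
    push_cast at hc0
    obtain ⟨c, hc2⟩ := binom_second ((k:ℤ)*(g:ℤ)) (-((p:ℤ) * (F:ℤ))) (n-1)
    rw [Nat.sub_add_cancel hn] at hc2
    have hx : (k:ℤ)*(g:ℤ) + (-((p:ℤ)*(F:ℤ))) = (R:ℤ) := by linarith
    rw [hx] at hc2
    refine ⟨(F:ℤ)^2 * c, ?_⟩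
    have hns : ((n-1:ℕ):ℤ) = (n:ℤ) - 1 := by omega
    rw [hns] at hc2
    push_cast
    linear_combination hc2
  have hd := Finset.dvd_sum hterm
  have hsplit : ∑ k ∈ Icc 1 (p-1),
      ( (((k*g) % p : ℕ):ℤ)^n - ((k*g:ℕ):ℤ)^n
        + (n:ℤ) * ((k*g:ℕ):ℤ)^(n-1) * ((p:ℤ) * (((k*g)/p : ℕ):ℤ)) )
      = (S - (g:ℤ)^n * S) + (n:ℤ) * (p:ℤ) * (g:ℤ)^(n-1) * T := by
    rw [Finset.sum_add_distrib, Finset.sum_sub_distrib]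
    have e1 : ∑ k ∈ Icc 1 (p-1), (((k*g) % p : ℕ):ℤ)^n = S :=
      sum_sigma hg (fun j => (j:ℤ)^n)
    have e2 : ∑ k ∈ Icc 1 (p-1), ((k*g:ℕ):ℤ)^n = (g:ℤ)^n * S := by
      rw [hS, Finset.mul_sum]
      apply Finset.sum_congr rfl
      intro k _
      push_cast
      ring
    have e3 : ∑ k ∈ Icc 1 (p-1), (n:ℤ) * ((k*g:ℕ):ℤ)^(n-1) * ((p:ℤ) * (((k*g)/p : ℕ):ℤ))
        = (n:ℤ) * (p:ℤ) * (g:ℤ)^(n-1) * T := by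
      rw [hT, Finset.mul_sum]
      apply Finset.sum_congr rfl
      intro k _
      push_cast
      ring
    rw [e1, e2, e3]
  rw [hsplit] at hd
  have hgoal : ((g:ℤ)^n - 1) * S - (n:ℤ) * (p:ℤ) * (g:ℤ)^(n-1) * T
      = -((S - (g:ℤ)^n * S) + (n:ℤ) * (p:ℤ) * (g:ℤ)^(n-1) * T) := by ring
  rw [hgoal]
  exact dvd_neg.mpr hd

lemma voronoi_qp (hp7 : 7 ≤ p) {g : ℕ} (hg : ¬ p ∣ g) {n : ℕ} (heven : Even n) (hn2 : 2 ≤ n)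
    (hnd : ¬ p ∣ (n+1)) :
    ‖((g:ℚ_[p])^n - 1) * (bernoulli n : ℚ_[p])
      - (n:ℚ_[p]) * (g:ℚ_[p])^(n-1) * ((∑ k ∈ Icc 1 (p-1), (k:ℤ)^(n-1) * (((k*g)/p : ℕ):ℤ) : ℤ) : ℚ_[p])‖
      ≤ (p:ℝ)^(-1:ℤ) := by
  set S : ℤ := ∑ k ∈ Icc 1 (p-1), (k:ℤ)^n with hS
  set T : ℤ := ∑ k ∈ Icc 1 (p-1), (k:ℤ)^(n-1) * (((k*g)/p : ℕ):ℤ) with hT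
  set G : ℚ_[p] := (g:ℚ_[p]) with hG
  set B : ℚ_[p] := (bernoulli n : ℚ_[p]) with hB
  have h1 : ‖(G^n - 1) * ((S:ℚ_[p])) - (n:ℚ_[p]) * (p:ℚ_[p]) * G^(n-1) * ((T:ℚ_[p]))‖
      ≤ (p:ℝ)^(-(2:ℕ):ℤ) := by
    have hd := voronoi_int hg (n := n) (by omega : 1 ≤ n)
    have := norm_int_le_pow (p := p) (j := 2) hd
    have hcast : ((((g:ℤ)^n - 1) * S - (n:ℤ) * (p:ℤ) * (g:ℤ)^(n-1) * T : ℤ) : ℚ_[p])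
        = (G^n - 1) * ((S:ℚ_[p])) - (n:ℚ_[p]) * (p:ℚ_[p]) * G^(n-1) * ((T:ℚ_[p])) := by
      push_cast
      ring
    rwa [hcast] at this
  have h2 : ‖((S:ℚ_[p])) - (p:ℚ_[p]) * B‖ ≤ (p:ℝ)^(-2:ℤ) := S_cong hp7 heven hn2 hnd
  have hGn : ‖G^n - 1‖ ≤ 1 := by
    have : G^n - 1 = (((g:ℤ)^n - 1 : ℤ) : ℚ_[p]) := by push_cast; ring
    rw [this]
    exact norm_int_le_one' _
  have h3 : ‖(G^n - 1) * (((S:ℚ_[p])) - (p:ℚ_[p]) * B)‖ ≤ (p:ℝ)^(-2:ℤ) := norm_mul_le'' hGn h2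
  have h4 : ‖(G^n - 1) * ((p:ℚ_[p]) * B) - (n:ℚ_[p]) * (p:ℚ_[p]) * G^(n-1) * ((T:ℚ_[p]))‖
      ≤ (p:ℝ)^(-2:ℤ) := by
    have e : (G^n - 1) * ((p:ℚ_[p]) * B) - (n:ℚ_[p]) * (p:ℚ_[p]) * G^(n-1) * ((T:ℚ_[p]))
        = ((G^n - 1) * ((S:ℚ_[p])) - (n:ℚ_[p]) * (p:ℚ_[p]) * G^(n-1) * ((T:ℚ_[p])))
          - (G^n - 1) * (((S:ℚ_[p])) - (p:ℚ_[p]) * B) := by ring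
    rw [e]
    refine le_trans (norm_sub_max _ _) (max_le ?_ h3)
    exact_mod_cast h1
  have e2 : (G^n - 1) * ((p:ℚ_[p]) * B) - (n:ℚ_[p]) * (p:ℚ_[p]) * G^(n-1) * ((T:ℚ_[p]))
      = (p:ℚ_[p]) * ((G^n - 1) * B - (n:ℚ_[p]) * G^(n-1) * ((T:ℚ_[p]))) := by ring
  rw [e2] at h4
  have := norm_of_p_mul h4
  norm_num at this ⊢
  exact this


lemma int_cong_norm {x y : ℤ} (h : (p:ℤ) ∣ x - y) :
    ‖(x:ℚ_[p]) - (y:ℚ_[p])‖ ≤ (p:ℝ)^(-1:ℤ) := by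
  have h1 : ((p:ℤ))^1 ∣ x - y := by rwa [pow_one]
  have := norm_int_le_pow (p:=p) h1
  have hc : ((x - y : ℤ) : ℚ_[p]) = (x:ℚ_[p]) - (y:ℚ_[p]) := by push_cast; ring
  rw [hc] at this
  have e2 : (p:ℝ)^(-((1:ℕ)):ℤ) = (p:ℝ)^(-1:ℤ) := by norm_num
  rwa [e2] at this

lemma exists_padic {x y : ℚ_[p]} (h : ‖x - y‖ ≤ (p:ℝ)^(-2:ℤ)) :
    ∃ z : ℤ_[p], x = y + (p:ℚ_[p])^2 * z := by
  have hpne : (p:ℚ_[p]) ≠ 0 := Nat.cast_ne_zero.mpr hp.1.ne_zero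
  have hnorm : ‖(x - y)/(p:ℚ_[p])^2‖ ≤ 1 := by
    rw [norm_div, norm_p_pow' 2]
    rw [div_le_one (zpow_pos' _)]
    have e2 : (p:ℝ)^(-((2:ℕ)):ℤ) = (p:ℝ)^(-2:ℤ) := by norm_num
    rw [e2]
    exact h
  refine ⟨⟨(x - y)/(p:ℚ_[p])^2, hnorm⟩, ?_⟩
  show x = y + (p:ℚ_[p])^2 * ((x - y)/(p:ℚ_[p])^2)
  field_simp
  ring

end Stmt18Aux

open Finset Stmt18Aux in
theorem stmt_18 (p m : ℕ) [hp : Fact p.Prime] (hp7 : 7 ≤ p)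
    (hm : Even m) (hm2 : 2 ≤ m) (hm3 : m ≤ p - 3) :
    ∃ z : ℤ_[p], (∑ k ∈ Finset.Icc 1 (p - 1), 1 / (k : ℚ_[p]) ^ m) =
      ((m : ℚ_[p]) / ((m : ℚ_[p]) + 1)) * (p : ℚ_[p]) * (bernoulli (p - 1 - m) : ℚ_[p])
      + (p : ℚ_[p]) ^ 2 * z := by
  have h2p := hp.1.two_le
  have hm3' : m + 3 ≤ p := by omega
  set a := p - 1 - m with ha
  set A := p*(p-1) - m with hA
  have hq : p*(p-1) = (p-1)*(p-1) + (p-1) := by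
    have h1 : p - 1 + 1 = p := by omega
    calc p*(p-1) = ((p-1)+1)*(p-1) := by rw [h1]
      _ = (p-1)*(p-1) + (p-1) := by ring
  have hApos : 42 ≤ p*(p-1) := by
    calc (42:ℕ) = 7*6 := rfl
    _ ≤ p*(p-1) := Nat.mul_le_mul hp7 (by omega)
  have hmle : m ≤ p*(p-1) := by omega
  have hAa : A = a + (p-1)*(p-1) := by rw [hA, ha, hq]; omega
  have ha2 : 2 ≤ a := by omega
  have hA2 : 2 ≤ A := by omega
  have hpodd : p % 2 = 1 := by
    rcases Nat.Prime.eq_two_or_odd hp.1 with h | h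
    · omega
    · exact h
  have hmE := Nat.even_iff.mp hm
  have haE : Even a := by rw [Nat.even_iff]; omega
  have hy2 : (p*(p-1)) % 2 = 0 := by
    have h0 : (p-1) % 2 = 0 := by omega
    rw [Nat.mul_mod, h0, Nat.mul_zero]
  have hAE : Even A := by rw [Nat.even_iff]; omega
  have hnda : ¬ p ∣ (a+1) := by
    intro h; have := Nat.le_of_dvd (by omega) h; omega
  have hndA : ¬ p ∣ (A+1) := by
    intro h
    have h1 : p ∣ p*(p-1) := Dvd.intro _ rfl
    have h2 : (A+1) + (m-1) = p*(p-1) := by omega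
    have h4 : p ∣ (A+1) + (m-1) := h2 ▸ h1
    have h3 : p ∣ (m-1) := (Nat.dvd_add_right h).mp h4
    have := Nat.le_of_dvd (by omega) h3
    omega
  have hndpa : ¬ (p-1) ∣ a := by
    intro h; have := Nat.le_of_dvd (by omega) h; omega
  have hndpA : ¬ (p-1) ∣ A := by
    intro h
    rw [hAa] at h
    have h1 : (p-1) ∣ (p-1)*(p-1) := Dvd.intro _ rfl
    exact hndpa ((Nat.dvd_add_iff_left h1).mpr h)
  obtain ⟨g, hgmem, hgdvd, hgkey⟩ := exists_gen (p := p)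
  set G : ℚ_[p] := (g:ℚ_[p]) with hG
  set Ta : ℤ := ∑ k ∈ Icc 1 (p-1), (k:ℤ)^(a-1) * (((k*g)/p : ℕ):ℤ) with hTa
  set TA : ℤ := ∑ k ∈ Icc 1 (p-1), (k:ℤ)^(A-1) * (((k*g)/p : ℕ):ℤ) with hTA
  set Ba : ℚ_[p] := (bernoulli a : ℚ_[p]) with hBa
  set BA : ℚ_[p] := (bernoulli A : ℚ_[p]) with hBA
  have hva := voronoi_qp hp7 hgdvd haE ha2 hnda
  have hvA := voronoi_qp hp7 hgdvd hAE hA2 hndA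
  have hBa1 : ‖Ba‖ ≤ 1 := bernoulli_norm_le_one hp7 haE (by omega) hndpa
  have hBA1 : ‖BA‖ ≤ 1 := bernoulli_norm_le_one hp7 hAE (by omega) hndpA
  have hkmem : ∀ k ∈ Icc 1 (p-1), ¬ p ∣ k := by
    intro k hk h
    have hk' := mem_Icc.mp hk
    have := Nat.le_of_dvd (by omega) h
    omega
  -- mod p congruences
  have hTT : ‖(TA:ℚ_[p]) - (Ta:ℚ_[p])‖ ≤ (p:ℝ)^(-1:ℤ) := by
    apply int_cong_norm
    rw [hTA, hTa, ← Finset.sum_sub_distrib]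
    apply Finset.dvd_sum
    intro k hk
    have e : (k:ℤ)^(A-1) * (((k*g)/p : ℕ):ℤ) - (k:ℤ)^(a-1) * (((k*g)/p : ℕ):ℤ)
        = ((k:ℤ)^(A-1) - (k:ℤ)^(a-1)) * (((k*g)/p : ℕ):ℤ) := by ring
    rw [e]
    exact Dvd.dvd.mul_right (fermat_pow_sub (hkmem k hk) _ _ (by omega)) _
  have hGA : ‖G^a - G^A‖ ≤ (p:ℝ)^(-1:ℤ) := by
    have h1 := int_cong_norm (p := p) (fermat_pow_sub hgdvd A a hAa)
    push_cast at h1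
    rw [norm_sub_rev] at h1
    exact h1
  have hGA1 : ‖G^(A-1) - G^(a-1)‖ ≤ (p:ℝ)^(-1:ℤ) := by
    have h1 := int_cong_norm (p := p) (fermat_pow_sub hgdvd (A-1) (a-1) (by omega))
    push_cast at h1
    exact h1
  have hGle : ‖G‖ ≤ 1 := norm_nat_le_one' g
  have hGpow : ∀ j : ℕ, ‖G^j‖ ≤ 1 := by
    intro j; rw [norm_pow]; exact pow_le_one₀ (norm_nonneg _) hGle
  have hm1 : ¬ p ∣ (m+1) := by
    intro h; have := Nat.le_of_dvd (by omega) h; omega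
  have hnm1 : ‖(m:ℚ_[p])+1‖ = 1 := by
    have h1 : (((m+1:ℕ)) : ℚ_[p]) = (m:ℚ_[p])+1 := by push_cast; ring
    rw [← h1]; exact norm_nat_eq_one hm1
  have hm1ne : ((m:ℚ_[p])+1) ≠ 0 := by
    intro h; rw [h, norm_zero] at hnm1; exact one_ne_zero hnm1.symm
  set c : ℚ_[p] := (m:ℚ_[p])/((m:ℚ_[p])+1) with hc
  have hcle : ‖c‖ ≤ 1 := by
    rw [hc, norm_div, hnm1, div_one]; exact norm_nat_le_one' m
  have hAc : ‖(A:ℚ_[p]) - c * (a:ℚ_[p])‖ ≤ (p:ℝ)^(-1:ℤ) := by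
    have hAz : (A:ℤ) = (p:ℤ)*((p:ℤ)-1) - (m:ℤ) := by
      rw [hA, Nat.cast_sub hmle, Nat.cast_mul, Nat.cast_sub (by omega : 1 ≤ p)]
      push_cast; ring
    have haz : (a:ℤ) = (p:ℤ) - 1 - (m:ℤ) := by
      rw [ha, Nat.cast_sub (by omega : m ≤ p - 1), Nat.cast_sub (by omega : 1 ≤ p)]
      push_cast; ring
    have hz : (p:ℤ) ∣ ((m:ℤ)+1)*(A:ℤ) - (m:ℤ)*(a:ℤ) := by
      refine ⟨((m:ℤ)+1)*((p:ℤ)-1) - (m:ℤ), ?_⟩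
      rw [hAz, haz]; ring
    have h1 := int_cong_norm (p := p) hz
    push_cast at h1
    have e : (A:ℚ_[p]) - c * (a:ℚ_[p])
        = (((m:ℚ_[p])+1)*(A:ℚ_[p]) - (m:ℚ_[p])*(a:ℚ_[p]))/((m:ℚ_[p])+1) := by
      rw [hc]; field_simp
    rw [e, norm_div, hnm1, div_one]
    exact h1
  -- Kummer chain
  have k1 : ‖(G^a - 1)*BA - c*(a:ℚ_[p])*G^(a-1)*(Ta:ℚ_[p])‖ ≤ (p:ℝ)^(-1:ℤ) := by
    have e : (G^a - 1)*BA - c*(a:ℚ_[p])*G^(a-1)*(Ta:ℚ_[p])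
        = ((G^A - 1)*BA - (A:ℚ_[p])*G^(A-1)*(TA:ℚ_[p]))
          + (G^a - G^A)*BA
          + ((A:ℚ_[p])*(TA:ℚ_[p]))*(G^(A-1) - G^(a-1))
          + ((A:ℚ_[p])*G^(a-1))*((TA:ℚ_[p]) - (Ta:ℚ_[p]))
          + (((A:ℚ_[p]) - c*(a:ℚ_[p]))*G^(a-1))*(Ta:ℚ_[p]) := by ring
    rw [e]
    apply norm_add_le'
    apply norm_add_le'
    apply norm_add_le'
    apply norm_add_le'
    · exact hvA
    · exact norm_mul_le' hGA hBA1
    · exact norm_mul_le'' (norm_mul_le' (norm_nat_le_one' A) (norm_int_le_one' TA)) hGA1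
    · exact norm_mul_le'' (norm_mul_le' (norm_nat_le_one' A) (hGpow (a-1))) hTT
    · exact norm_mul_le' (norm_mul_le' hAc (hGpow (a-1))) (norm_int_le_one' Ta)
  have k4 : ‖c * ((G^a - 1)*Ba - (a:ℚ_[p])*G^(a-1)*(Ta:ℚ_[p]))‖ ≤ (p:ℝ)^(-1:ℤ) :=
    norm_mul_le'' hcle hva
  have k5 : ‖(G^a - 1)*(BA - c*Ba)‖ ≤ (p:ℝ)^(-1:ℤ) := by
    have e : (G^a - 1)*(BA - c*Ba)
        = ((G^a - 1)*BA - c*(a:ℚ_[p])*G^(a-1)*(Ta:ℚ_[p]))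
          - c * ((G^a - 1)*Ba - (a:ℚ_[p])*G^(a-1)*(Ta:ℚ_[p])) := by ring
    rw [e]
    exact le_trans (norm_sub_max _ _) (max_le k1 k4)
  have hga1 : ‖G^a - 1‖ = 1 := by
    have e : G^a - 1 = (((g:ℤ)^a - 1 : ℤ) : ℚ_[p]) := by push_cast; ring
    rw [e]
    exact norm_int_eq_one (hgkey a hndpa)
  have k6 : ‖BA - c*Ba‖ ≤ (p:ℝ)^(-1:ℤ) := by
    rw [norm_mul, hga1, one_mul] at k5
    exact k5
  -- final assembly
  set SA : ℤ := ∑ k ∈ Icc 1 (p-1), (k:ℤ)^A with hSA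
  have F1 : ‖(∑ k ∈ Finset.Icc 1 (p - 1), 1 / (k : ℚ_[p]) ^ m) - (SA:ℚ_[p])‖
      ≤ (p:ℝ)^(-2:ℤ) := by
    have hcastSA : (SA:ℚ_[p]) = ∑ k ∈ Icc 1 (p-1), (k:ℚ_[p])^A := by
      rw [hSA]; push_cast; rfl
    rw [hcastSA, ← Finset.sum_sub_distrib]
    apply norm_sum_le' _ _ (le_of_lt (zpow_pos' _))
    intro k hk
    have hknd := hkmem k hk
    have hknorm : ‖(k:ℚ_[p])‖ = 1 := norm_nat_eq_one hknd
    have hkne : (k:ℚ_[p]) ≠ 0 := by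
      intro h; rw [h, norm_zero] at hknorm; exact one_ne_zero hknorm.symm
    have heul : ((p:ℤ))^2 ∣ 1 - ((k^(p*(p-1)) : ℕ):ℤ) := by
      have hcop : Nat.Coprime k (p^2) :=
        ((hp.1.coprime_iff_not_dvd.mpr hknd).symm).pow_right 2
      have htot : Nat.totient (p^2) = p*(p-1) := by
        rw [Nat.totient_prime_pow hp.1 (by norm_num : 0 < 2)]
        norm_num
      have hmodeq := Nat.ModEq.pow_totient hcop
      rw [htot] at hmodeq
      have hdvd := hmodeq.dvd
      push_cast at hdvd ⊢
      exact hdvd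
    have hpow : (k:ℚ_[p])^A * (k:ℚ_[p])^m = (k:ℚ_[p])^(p*(p-1)) := by
      rw [← pow_add]; congr 1; omega
    have e : 1/(k:ℚ_[p])^m - (k:ℚ_[p])^A
        = ((1 - ((k^(p*(p-1)) : ℕ):ℤ) : ℤ) : ℚ_[p]) / (k:ℚ_[p])^m := by
      have hc2 : ((1 - ((k^(p*(p-1)) : ℕ):ℤ) : ℤ) : ℚ_[p]) = 1 - (k:ℚ_[p])^(p*(p-1)) := by
        push_cast; ring
      rw [hc2, ← hpow]
      field_simp
    rw [e, norm_div, norm_pow, hknorm, one_pow, div_one]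
    exact norm_int_le_pow heul
  have F2 : ‖(SA:ℚ_[p]) - (p:ℚ_[p]) * BA‖ ≤ (p:ℝ)^(-2:ℤ) :=
    S_cong hp7 hAE hA2 hndA
  have F3 : ‖(p:ℚ_[p]) * BA - c * (p:ℚ_[p]) * Ba‖ ≤ (p:ℝ)^(-2:ℤ) := by
    have e : (p:ℚ_[p]) * BA - c * (p:ℚ_[p]) * Ba = (p:ℚ_[p]) * (BA - c*Ba) := by ring
    rw [e, norm_mul, Padic.norm_p]
    calc (p:ℝ)⁻¹ * ‖BA - c*Ba‖ ≤ (p:ℝ)⁻¹ * (p:ℝ)^(-1:ℤ) := by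
          apply mul_le_mul_of_nonneg_left k6
          positivity
      _ = (p:ℝ)^(-2:ℤ) := by
          rw [← zpow_neg_one, ← zpow_add₀ (by positivity : (p:ℝ) ≠ 0)]
          norm_num
  have htotal : ‖(∑ k ∈ Finset.Icc 1 (p - 1), 1 / (k : ℚ_[p]) ^ m)
      - c * (p:ℚ_[p]) * Ba‖ ≤ (p:ℝ)^(-2:ℤ) :=
    ultra_sub_trans F1 (ultra_sub_trans F2 F3)
  exact exists_padic htotal
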